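/- Let $\alpha>-2$ and $\epsilon>0$, and let $U_{\epsilon,\alpha}(x)=\frac{(3+\alpha)^{1/(4+2\alpha)}\,\epsilon^{1/2}}{(\epsilon^{2+\alpha}+|x|^{2+\alpha})^{1/(2+\alpha)}}$ for $x\in\mathbb{R}^3$. Then equality holds in the weighted Sobolev inequality: $\int_{\mathbb{R}^3}|\nabla U_{\epsilon,\alpha}|^2\,dx \;=\; S_\alpha\left(\int_{\mathbb{R}^3}|x|^{\alpha}\,U_{\epsilon,\alpha}^{\,6+2\alpha}\,dx\right)^{\frac{2}{6+2\alpha}}.$ -/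

import Mathlib

open MeasureTheory Real Set

lemma realBeta01 {s t : ℝ} (hs : 0 < s) (ht : 0 < t) :
    ∫ x in (0:ℝ)..1, x ^ (s-1) * (1-x) ^ (t-1) = Gamma s * Gamma t / Gamma (s+t) := by
  have key : Complex.Gamma s * Complex.Gamma t
      = Complex.Gamma (s+t) * Complex.betaIntegral s t := by
    have := Complex.Gamma_mul_Gamma_eq_betaIntegral (s := (s:ℂ)) (t := (t:ℂ))
      (by simpa using hs) (by simpa using ht)
    simpa using this
  have hbeta : Complex.betaIntegral s t
      = ((∫ x in (0:ℝ)..1, x ^ (s-1) * (1-x) ^ (t-1) : ℝ) : ℂ) := by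
    rw [Complex.betaIntegral, ← intervalIntegral.integral_ofReal]
    refine intervalIntegral.integral_congr fun x hx => ?_
    rw [uIcc_of_le (by norm_num)] at hx
    push_cast
    rw [Complex.ofReal_cpow hx.1, Complex.ofReal_cpow (by linarith [hx.2])]
    push_cast
    ring
  have hne : Complex.Gamma (s+t) ≠ 0 := by
    rw [show ((s:ℂ)+t) = ((s+t:ℝ):ℂ) by push_cast; ring, Complex.Gamma_ofReal]
    simpa using (Real.Gamma_pos_of_pos (by linarith)).ne'
  rw [hbeta] at key
  have : ((Gamma s * Gamma t : ℝ) : ℂ)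
      = ((Gamma (s+t) * ∫ x in (0:ℝ)..1, x ^ (s-1) * (1-x) ^ (t-1) : ℝ) : ℂ) := by
    push_cast
    rw [← Complex.Gamma_ofReal, ← Complex.Gamma_ofReal, ← Complex.Gamma_ofReal]
    push_cast
    exact key
  have h2 := Complex.ofReal_inj.mp this
  rw [h2]
  field_simp [(Real.Gamma_pos_of_pos (show (0:ℝ) < s+t by linarith)).ne']

lemma betaIoi {s t : ℝ} (hs : 0 < s) (ht : 0 < t) :
    ∫ x in Ioi (0:ℝ), x ^ (s-1) * (1+x) ^ (-(s+t)) = Gamma s * Gamma t / Gamma (s+t) := by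
  have himg : (fun y : ℝ => y / (1 - y)) '' Ioo 0 1 = Ioi 0 := by
    ext x
    simp only [mem_image, mem_Ioo, mem_Ioi]
    constructor
    · rintro ⟨y, hy, rfl⟩
      exact div_pos hy.1 (by linarith [hy.2])
    · intro hx
      have hx1 : (0:ℝ) < 1 + x := by linarith
      refine ⟨x / (1 + x), ⟨div_pos hx hx1, by rw [div_lt_one hx1]; linarith⟩, ?_⟩
      have h1 : (1:ℝ) - x / (1+x) = 1 / (1+x) := by field_simp; ring
      rw [h1]
      field_simp
  have hderiv : ∀ y ∈ Ioo (0:ℝ) 1, HasDerivWithinAt (fun y : ℝ => y / (1 - y))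
      ((1 - y)⁻¹ ^ 2) (Ioo 0 1) y := by
    intro y hy
    have h1 : (1:ℝ) - y ≠ 0 := by simp only [mem_Ioo] at hy; intro h; linarith [hy.2]
    have h2 : HasDerivAt (fun y : ℝ => y / (1 - y)) ((1 * (1 - y) - y * -1) / (1 - y) ^ 2) y :=
      ((hasDerivAt_id y).div ((hasDerivAt_id y).const_sub 1) h1)
    have h3 : (1 - y)⁻¹ ^ 2 = (1 * (1 - y) - y * -1) / (1 - y) ^ 2 := by
      rw [inv_pow, ← one_div]
      congr 1
      ring
    rw [h3]
    exact h2.hasDerivWithinAt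
  have hinj : InjOn (fun y : ℝ => y / (1 - y)) (Ioo 0 1) := by
    intro u hu v hv h
    simp only [mem_Ioo] at hu hv
    have h1 : (1:ℝ) - u ≠ 0 := by intro h; linarith [hu.2]
    have h2 : (1:ℝ) - v ≠ 0 := by intro h; linarith [hv.2]
    field_simp at h
    linarith
  have key := integral_image_eq_integral_abs_deriv_smul measurableSet_Ioo hderiv hinj
    (fun x => x ^ (s-1) * (1+x) ^ (-(s+t)))
  rw [himg] at key
  rw [key]
  have hpt : ∀ y ∈ Ioo (0:ℝ) 1,
      |(1 - y)⁻¹ ^ 2| • ((y/(1-y)) ^ (s-1) * (1+y/(1-y)) ^ (-(s+t)))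
        = y ^ (s-1) * (1-y) ^ (t-1) := by
    intro y hy
    simp only [mem_Ioo] at hy
    have hz : (0:ℝ) < 1 - y := by linarith [hy.2]
    set z := 1 - y with hzdef
    have h1 : (1:ℝ) + y/z = z⁻¹ := by
      rw [hzdef]
      have hz' : (1:ℝ) - y ≠ 0 := by linarith
      field_simp
      ring
    have e1 : |z⁻¹ ^ 2| = z ^ (-2:ℝ) := by
      rw [abs_of_nonneg (by positivity), ← Real.rpow_natCast z⁻¹ 2,
        ← Real.rpow_neg_one z, ← Real.rpow_mul hz.le]
      norm_num
    have e2 : (y/z) ^ (s-1) = y ^ (s-1) * z ^ (-(s-1)) := by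
      rw [Real.div_rpow hy.1.le hz.le, Real.rpow_neg hz.le, div_eq_mul_inv]
    have e3 : (z⁻¹) ^ (-(s+t)) = z ^ (s+t) := by
      rw [← Real.rpow_neg_one z, ← Real.rpow_mul hz.le]
      norm_num
    rw [smul_eq_mul, h1, e1, e2, e3]
    calc z ^ (-2:ℝ) * (y ^ (s-1) * z ^ (-(s-1)) * z ^ (s+t))
        = y ^ (s-1) * (z ^ (-2:ℝ) * z ^ (-(s-1)) * z ^ (s+t)) := by ring
      _ = y ^ (s-1) * z ^ (t-1) := by
          rw [← Real.rpow_add hz, ← Real.rpow_add hz,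
            show (-2:ℝ) + -(s-1) + (s+t) = t - 1 by ring]
  rw [setIntegral_congr_fun measurableSet_Ioo hpt,
    ← integral_Ioc_eq_integral_Ioo, ← intervalIntegral.integral_of_le (by norm_num : (0:ℝ) ≤ 1)]
  exact realBeta01 hs ht

lemma intIoi {p c d ε : ℝ} (hp : 0 < p) (hε : 0 < ε)
    (hs : 0 < (c+1)/p) (ht : 0 < d - (c+1)/p) :
    ∫ r in Ioi (0:ℝ), r ^ c * (ε^p + r^p) ^ (-d)
      = ε ^ (c+1-d*p) / p * (Gamma ((c+1)/p) * Gamma (d-(c+1)/p) / Gamma d) := by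
  -- step 1 : scaling r = ε * x
  have h := integral_comp_mul_left_Ioi (fun r => r ^ c * (ε^p + r^p) ^ (-d)) 0 hε
  rw [mul_zero] at h
  have h2 : ∀ x ∈ Ioi (0:ℝ), (fun r => r ^ c * (ε^p + r^p) ^ (-d)) (ε * x)
      = ε ^ (c + p * (-d)) * (x ^ c * (1 + x^p) ^ (-d)) := by
    intro x hx
    have hx0 : (0:ℝ) < x := hx
    simp only
    rw [Real.mul_rpow hε.le hx0.le, Real.mul_rpow hε.le hx0.le,
      show ε^p + ε^p * x^p = ε^p * (1 + x^p) by ring,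
      Real.mul_rpow (by positivity) (by positivity),
      ← Real.rpow_mul hε.le, Real.rpow_add hε]
    ring
  rw [setIntegral_congr_fun measurableSet_Ioi h2, integral_const_mul] at h
  have step1 : ∫ r in Ioi (0:ℝ), r ^ c * (ε^p + r^p) ^ (-d)
      = ε ^ (c+1-d*p) * ∫ t in Ioi (0:ℝ), t ^ c * (1 + t^p) ^ (-d) := by
    rw [smul_eq_mul] at h
    have hI : ∫ r in Ioi (0:ℝ), r ^ c * (ε^p + r^p) ^ (-d)
        = ε * (ε ^ (c + p * (-d)) * ∫ t in Ioi (0:ℝ), t ^ c * (1 + t^p) ^ (-d)) := by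
      rw [h]
      field_simp
    have key2 : ε * ε ^ (c + p * -d) = ε ^ (c+1-d*p) := by
      have h9 := Real.rpow_add hε 1 (c + p * -d)
      rw [Real.rpow_one] at h9
      rw [← h9]
      congr 1
      ring
    rw [hI, ← mul_assoc, key2]
  -- step 2 : substitution u = t^p
  have h3 := integral_comp_rpow_Ioi
    (fun u => p⁻¹ * (u ^ ((c+1)/p - 1) * (1+u) ^ (-d))) hp.ne'
  have h4 : ∀ x ∈ Ioi (0:ℝ),
      (|p| * x ^ (p-1)) • (fun u => p⁻¹ * (u ^ ((c+1)/p - 1) * (1+u) ^ (-d))) (x^p)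
        = x ^ c * (1 + x^p) ^ (-d) := by
    intro x hx
    have hx0 : (0:ℝ) < x := hx
    simp only [smul_eq_mul]
    rw [abs_of_pos hp, ← Real.rpow_mul hx0.le,
      show p * ((c+1)/p - 1) = c + 1 - p by field_simp]
    have : p * x ^ (p-1) * (p⁻¹ * (x ^ (c+1-p) * (1+x^p) ^ (-d)))
        = (x ^ (p-1) * x ^ (c+1-p)) * (1+x^p) ^ (-d) := by
      field_simp
    rw [this, ← Real.rpow_add hx0, show p - 1 + (c+1-p) = c by ring]
  rw [setIntegral_congr_fun measurableSet_Ioi h4] at h3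
  -- step 3 : Beta evaluation
  have h5 : ∫ u in Ioi (0:ℝ), p⁻¹ * (u ^ ((c+1)/p - 1) * (1+u) ^ (-d))
      = p⁻¹ * (Gamma ((c+1)/p) * Gamma (d-(c+1)/p) / Gamma d) := by
    rw [integral_const_mul]
    congr 1
    have := betaIoi hs ht
    rw [show (c+1)/p + (d - (c+1)/p) = d by ring] at this
    rw [this]
  rw [step1, h3, h5]
  ring

lemma volball : (volume (Metric.ball (0 : EuclideanSpace ℝ (Fin 3)) 1)).toReal = 4 * π / 3 := by
  rw [EuclideanSpace.volume_ball]
  have hcard : Fintype.card (Fin 3) = 3 := by simp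
  rw [hcard]
  have hG : Real.Gamma ((3:ℕ) / 2 + 1) = 3/4 * √π := by
    push_cast
    rw [show (3:ℝ)/2 + 1 = (3/2) + 1 by norm_num, Real.Gamma_add_one (by norm_num),
      show (3:ℝ)/2 = 1/2 + 1 by norm_num, Real.Gamma_add_one (by norm_num),
      show (1:ℝ)/2 + 1 = 2⁻¹ + 1 by norm_num]
    rw [show (2:ℝ)⁻¹ = 1/2 by norm_num, Real.Gamma_one_half_eq]
    ring
  rw [hG]
  have hπ : 0 < π := Real.pi_pos
  have hsq : 0 < √π := Real.sqrt_pos.mpr hπ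
  rw [ENNReal.toReal_mul]
  rw [ENNReal.ofReal_one, one_pow, ENNReal.toReal_one,
    ENNReal.toReal_ofReal (by positivity), one_mul]
  rw [div_eq_iff (by positivity : (3:ℝ)/4 * √π ≠ 0)]
  have h3 : √π ^ 3 = π * √π := by
    rw [pow_succ, sq_sqrt hπ.le]
  rw [h3]
  ring
  
lemma sphE3 (f : ℝ → ℝ) :
    ∫ x : EuclideanSpace ℝ (Fin 3), f ‖x‖
      = (4 * π) * ∫ y in Ioi (0:ℝ), y ^ (2:ℕ) * f y := by
  rw [integral_fun_norm_addHaar (volume : Measure (EuclideanSpace ℝ (Fin 3))) f]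
  rw [measureReal_def]
  simp only [finrank_euclideanSpace_fin, volball, smul_eq_mul, nsmul_eq_mul]
  norm_num
  ring_nf

lemma fderivU_norm {p C ε : ℝ} (hp : 0 < p) (hC : 0 < C) (hε : 0 < ε)
    (x : EuclideanSpace ℝ (Fin 3)) (hx : x ≠ 0) :
    ‖fderiv ℝ (fun y : EuclideanSpace ℝ (Fin 3) => C / (ε^p + ‖y‖^p) ^ (1/p)) x‖
      = C * ‖x‖ ^ (p-1) * (ε^p + ‖x‖^p) ^ (-((p+1)/p)) := by
  have hxn : (0:ℝ) < ‖x‖ := norm_pos_iff.mpr hx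
  set s0 : ℝ := ‖x‖ ^ (2:ℕ) with hs0
  have hs0pos : 0 < s0 := by positivity
  set t0 : ℝ := ε^p + s0 ^ (p/2) with ht0
  have hs0p : s0 ^ (p/2) = ‖x‖ ^ p := by
    rw [hs0, ← Real.rpow_natCast ‖x‖ 2, ← Real.rpow_mul (norm_nonneg x)]
    congr 1
    push_cast
    ring
  have ht0pos : 0 < t0 := by
    rw [ht0, hs0p]; positivity
  have hinner : HasDerivAt (fun s : ℝ => ε^p + s ^ (p/2))
      ((p/2) * s0 ^ (p/2 - 1)) s0 :=
    (Real.hasDerivAt_rpow_const (Or.inl hs0pos.ne')).const_add (ε^p)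
  have houter : HasDerivAt (fun t : ℝ => C * t ^ (-(1/p)))
      (C * (-(1/p) * t0 ^ (-(1/p) - 1))) t0 :=
    (Real.hasDerivAt_rpow_const (Or.inl ht0pos.ne')).const_mul C
  have hφ : HasDerivAt ((fun t : ℝ => C * t ^ (-(1/p))) ∘ (fun s : ℝ => ε^p + s ^ (p/2)))
      ((C * (-(1/p) * t0 ^ (-(1/p) - 1))) * ((p/2) * s0 ^ (p/2 - 1))) s0 :=
    houter.comp s0 hinner
  have hnsq : HasFDerivAt (fun y : EuclideanSpace ℝ (Fin 3) => ‖y‖ ^ (2:ℕ))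
      (2 • (innerSL ℝ) x) x := (hasStrictFDerivAt_norm_sq x).hasFDerivAt
  have hcomp := hφ.comp_hasFDerivAt x hnsq
  have hUeq : (fun y : EuclideanSpace ℝ (Fin 3) => C / (ε^p + ‖y‖^p) ^ (1/p))
      = (((fun t : ℝ => C * t ^ (-(1/p))) ∘ (fun s : ℝ => ε^p + s ^ (p/2))) ∘
          (fun y : EuclideanSpace ℝ (Fin 3) => ‖y‖ ^ (2:ℕ))) := by
    funext y
    simp only [Function.comp_apply]
    have h1 : ((‖y‖:ℝ) ^ (2:ℕ)) ^ (p/2) = ‖y‖ ^ p := by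
      rw [← Real.rpow_natCast ‖y‖ 2, ← Real.rpow_mul (norm_nonneg y)]
      congr 1
      push_cast
      ring
    rw [h1, Real.rpow_neg (by positivity), div_eq_mul_inv]
  rw [hUeq, hcomp.fderiv]
  rw [show (2:ℕ) • (innerSL ℝ) x = (2:ℝ) • (innerSL ℝ) x by rw [two_smul, two_smul]]
  rw [smul_smul, norm_smul, innerSL_apply_norm]
  have hk : C * (-(1/p) * t0 ^ (-(1/p) - 1)) * (p/2 * s0 ^ (p/2-1)) * 2
      = -(C * t0 ^ (-(1/p) - 1) * s0 ^ (p/2-1)) := by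
    field_simp
  rw [hk, Real.norm_eq_abs, abs_neg, abs_of_nonneg (by positivity)]
  have e1 : t0 ^ (-(1/p) - 1) = (ε^p + ‖x‖^p) ^ (-((p+1)/p)) := by
    rw [ht0, hs0p]
    congr 1
    field_simp
    ring
  have e2 : s0 ^ (p/2-1) = ‖x‖ ^ (p-2) := by
    rw [hs0, ← Real.rpow_natCast ‖x‖ 2, ← Real.rpow_mul (norm_nonneg x)]
    congr 1
    push_cast
    ring
  rw [e1, e2, show (p-1) = (p-2) + 1 by ring, Real.rpow_add hxn, Real.rpow_one]
  ring

lemma finalAlg {p e G1 G2 : ℝ} (hp : 0 < p) (he : 0 < e) (hG1 : 0 < G1) (hG2 : 0 < G2) :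
    4*π * ((p+1) ^ ((1:ℝ)/p) * e) * (e ^ (-1:ℝ)/p * (((p+1)/p * G1) * (p * G1) / G2))
    = (p+1) * ((4*π/p) * G1 ^ (2:ℕ) / G2) ^ (p/(p+1)) *
      ((4*π) * ((p+1) ^ ((p+1)/p) * e ^ (p+1)) * (e ^ (-(p+1))/p * (G1 * G1 / G2))) ^ ((1:ℝ)/(p+1)) := by
  have hπ : 0 < π := Real.pi_pos
  have hp1 : 0 < p + 1 := by linarith
  set K : ℝ := (4*π/p) * G1 ^ (2:ℕ) / G2 with hK
  have hKpos : 0 < K := by positivity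
  -- simplify LHS
  have hLHS : 4*π * ((p+1) ^ ((1:ℝ)/p) * e) * (e ^ (-1:ℝ)/p * (((p+1)/p * G1) * (p * G1) / G2))
      = (p+1) ^ (1 + (1:ℝ)/p) * K := by
    rw [Real.rpow_neg_one, Real.rpow_add (by linarith : (0:ℝ) < p+1), Real.rpow_one, hK]
    field_simp
  -- simplify inner of second rpow factor
  have hinner : (4*π) * ((p+1) ^ ((p+1)/p) * e ^ (p+1)) * (e ^ (-(p+1))/p * (G1 * G1 / G2))
      = (p+1) ^ ((p+1)/p) * K := by
    have he1 : e ^ (p+1) * e ^ (-(p+1)) = 1 := by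
      rw [← Real.rpow_add he, show p+1 + -(p+1) = (0:ℝ) by ring, Real.rpow_zero]
    calc (4*π) * ((p+1) ^ ((p+1)/p) * e ^ (p+1)) * (e ^ (-(p+1))/p * (G1 * G1 / G2))
        = (e ^ (p+1) * e ^ (-(p+1))) * ((p+1) ^ ((p+1)/p) * (4*π/p * (G1*G1)/G2)) := by
          ring
      _ = (p+1) ^ ((p+1)/p) * K := by rw [he1, one_mul, hK, sq]
  rw [hLHS, hinner]
  rw [Real.mul_rpow (Real.rpow_pos_of_pos hp1 _).le hKpos.le,
    ← Real.rpow_mul hp1.le,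
    show (p+1)/p * ((1:ℝ)/(p+1)) = 1/p by field_simp]
  have hKK : K ^ (p/(p+1)) * K ^ ((1:ℝ)/(p+1)) = K := by
    rw [← Real.rpow_add hKpos, ← add_div, div_self hp1.ne', Real.rpow_one]
  calc (p+1) ^ (1 + (1:ℝ)/p) * K
      = ((p+1) * (p+1) ^ ((1:ℝ)/p)) * (K ^ (p/(p+1)) * K ^ ((1:ℝ)/(p+1))) := by
        rw [hKK, Real.rpow_add hp1, Real.rpow_one]
    _ = (p+1) * K ^ (p/(p+1)) * ((p+1) ^ ((1:ℝ)/p) * K ^ ((1:ℝ)/(p+1))) := by ring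

/-- `ℝ³` as a Euclidean space. -/
abbrev E3 := EuclideanSpace ℝ (Fin 3)

/-- The best constant `S_α` in the weighted (Hardy/Hénon–)Sobolev inequality on `ℝ³`. -/
noncomputable def Sconst (a : ℝ) : ℝ :=
  (3 + a) * ((4 * Real.pi / (2 + a)) *
    (Real.Gamma ((3 + a) / (2 + a))) ^ 2 / Real.Gamma (2 * (3 + a) / (2 + a))) ^ ((2 + a) / (3 + a))

/-- The function `U_{ε,α}` achieves equality in the weighted Sobolev inequality, i.e. it
achieves the best constant `S_α`. -/
theorem stmt2 (a ε : ℝ) (ha : -2 < a) (hε : 0 < ε) (U : E3 → ℝ)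
    (hU : ∀ x : E3, U x = (3 + a) ^ (1 / (4 + 2 * a)) * ε ^ ((1 : ℝ) / 2) /
      (ε ^ (2 + a) + ‖x‖ ^ (2 + a)) ^ (1 / (2 + a))) :
    (∫ x : E3, ‖fderiv ℝ U x‖ ^ 2)
      = Sconst a * (∫ x : E3, ‖x‖ ^ a * U x ^ (6 + 2 * a)) ^ (2 / (6 + 2 * a)) := by
  have hp : (0:ℝ) < 2 + a := by linarith
  have h3a : (0:ℝ) < 3 + a := by linarith
  set C : ℝ := (3 + a) ^ (1 / (4 + 2 * a)) * ε ^ ((1:ℝ) / 2) with hCdef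
  have hC : 0 < C := mul_pos (Real.rpow_pos_of_pos h3a _) (Real.rpow_pos_of_pos hε _)
  have hUeq : U = fun x : E3 => C / (ε ^ (2+a) + ‖x‖ ^ (2+a)) ^ (1/(2+a)) := funext hU
  rw [hUeq]
  -- a.e. nonvanishing
  have h0 : ∀ᵐ (x : E3), x ≠ 0 := by
    rw [MeasureTheory.ae_iff]
    have hset : {x : E3 | ¬ x ≠ 0} = {(0 : E3)} := by ext y; simp
    rw [hset]
    exact measure_singleton 0
  -- LHS reduction to radial integral
  set F : ℝ → ℝ := fun r =>
    (C * r ^ ((2+a)-1) * (ε^(2+a) + r^(2+a)) ^ (-(((2+a)+1)/(2+a)))) ^ (2:ℕ) with hF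
  have h1 : (∫ x : E3, ‖fderiv ℝ (fun x : E3 => C / (ε ^ (2+a) + ‖x‖ ^ (2+a)) ^ (1/(2+a))) x‖ ^ 2)
      = ∫ x : E3, F ‖x‖ := by
    refine integral_congr_ae ?_
    filter_upwards [h0] with x hx
    rw [fderivU_norm hp hC hε x hx, hF]
  rw [h1, sphE3 F]
  -- RHS reduction to radial integral
  set G : ℝ → ℝ := fun r =>
    r ^ a * (C / (ε ^ (2+a) + r ^ (2+a)) ^ (1/(2+a))) ^ (6+2*a) with hG
  have h2 : (∫ x : E3, ‖x‖ ^ a * (C / (ε ^ (2+a) + ‖x‖ ^ (2+a)) ^ (1/(2+a))) ^ (6+2*a))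
      = ∫ x : E3, G ‖x‖ := rfl
  rw [h2, sphE3 G]
  -- pointwise simplification of LHS radial integrand
  have hLpt : ∀ y ∈ Ioi (0:ℝ), y ^ (2:ℕ) * F y
      = C ^ (2:ℕ) * (y ^ (2*(2+a)) * (ε^(2+a) + y^(2+a)) ^ (-((2*(2+a)+2)/(2+a)))) := by
    intro y hy
    have hy0 : (0:ℝ) < y := hy
    have w0 : (0:ℝ) < ε^(2+a) + y^(2+a) := by positivity
    have e1 : (y ^ ((2+a)-1)) ^ (2:ℕ) = y ^ (2*(2+a)-2) := by
      rw [← Real.rpow_natCast (y ^ ((2+a)-1)) 2, ← Real.rpow_mul hy0.le]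
      congr 1
      push_cast
      ring
    have e2 : ((ε^(2+a) + y^(2+a)) ^ (-(((2+a)+1)/(2+a)))) ^ (2:ℕ)
        = (ε^(2+a) + y^(2+a)) ^ (-((2*(2+a)+2)/(2+a))) := by
      rw [← Real.rpow_natCast _ 2, ← Real.rpow_mul w0.le]
      congr 1
      push_cast
      field_simp
    have e3 : (y:ℝ) ^ (2:ℕ) * y ^ (2*(2+a)-2) = y ^ (2*(2+a)) := by
      rw [← Real.rpow_natCast y 2, ← Real.rpow_add hy0]
      congr 1
      push_cast
      ring
    rw [hF]
    simp only
    rw [mul_pow, mul_pow, e1, e2, ← e3]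
    ring
  -- pointwise simplification of RHS radial integrand
  have hRpt : ∀ y ∈ Ioi (0:ℝ), y ^ (2:ℕ) * G y
      = C ^ (6+2*a) * (y ^ (2+a) * (ε^(2+a) + y^(2+a)) ^ (-((2*(2+a)+2)/(2+a)))) := by
    intro y hy
    have hy0 : (0:ℝ) < y := hy
    have w0 : (0:ℝ) < ε^(2+a) + y^(2+a) := by positivity
    have e1 : (C / (ε^(2+a) + y^(2+a)) ^ (1/(2+a))) ^ (6+2*a)
        = C ^ (6+2*a) * (ε^(2+a) + y^(2+a)) ^ (-((2*(2+a)+2)/(2+a))) := by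
      rw [Real.div_rpow hC.le (by positivity), ← Real.rpow_mul w0.le,
        show (1/(2+a))*(6+2*a) = (2*(2+a)+2)/(2+a) by field_simp; ring,
        div_eq_mul_inv, ← Real.rpow_neg w0.le]
    have e2 : (y:ℝ) ^ (2:ℕ) * y ^ a = y ^ (2+a) := by
      rw [← Real.rpow_natCast y 2, ← Real.rpow_add hy0]
      norm_num
    rw [hG]
    simp only
    rw [e1, ← e2]
    ring
  rw [setIntegral_congr_fun measurableSet_Ioi hLpt,
    setIntegral_congr_fun measurableSet_Ioi hRpt, integral_const_mul, integral_const_mul]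
  have hs1 : (0:ℝ) < (2*(2+a)+1)/(2+a) := by positivity
  have ht1 : (0:ℝ) < (2*(2+a)+2)/(2+a) - (2*(2+a)+1)/(2+a) := by
    rw [div_sub_div_same, show 2*(2+a)+2-(2*(2+a)+1) = (1:ℝ) by ring]
    positivity
  have hs2 : (0:ℝ) < ((2+a)+1)/(2+a) := by positivity
  have ht2 : (0:ℝ) < (2*(2+a)+2)/(2+a) - ((2+a)+1)/(2+a) := by
    rw [div_sub_div_same, show 2*(2+a)+2-((2+a)+1) = ((2+a)+1:ℝ) by ring]
    positivity
  have hI1 := intIoi (p := 2+a) (c := 2*(2+a)) (d := (2*(2+a)+2)/(2+a)) (ε := ε) hp hε hs1 ht1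
  have hI2 := intIoi (p := 2+a) (c := (2+a)) (d := (2*(2+a)+2)/(2+a)) (ε := ε) hp hε hs2 ht2
  rw [hI1, hI2]
  rw [show 2*(2+a)+1 - (2*(2+a)+2)/(2+a)*(2+a) = (-1:ℝ) by field_simp; ring]
  rw [show (2+a)+1 - (2*(2+a)+2)/(2+a)*(2+a) = -((2+a)+1) by field_simp; ring]
  rw [show (2*(2+a)+2)/(2+a) - (2*(2+a)+1)/(2+a) = 1/(2+a) by
    rw [div_sub_div_same]; congr 1; ring]
  rw [show (2*(2+a)+1)/(2+a) = ((2+a)+1)/(2+a) + 1 by field_simp; ring]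
  rw [Real.Gamma_add_one (ne_of_gt hs2)]
  have hGinv : Real.Gamma (1/(2+a)) = (2+a) * Real.Gamma (((2+a)+1)/(2+a)) := by
    have h := Real.Gamma_add_one (show (1:ℝ)/(2+a) ≠ 0 by positivity)
    rw [show (1:ℝ)/(2+a) + 1 = ((2+a)+1)/(2+a) by
      field_simp
      ring] at h
    rw [h]
    field_simp
  rw [hGinv]
  rw [show (2*(2+a)+2)/(2+a) - ((2+a)+1)/(2+a) = ((2+a)+1)/(2+a) by
    rw [div_sub_div_same]; congr 1; ring]
  have hC2 : C ^ (2:ℕ) = ((2+a)+1) ^ ((1:ℝ)/(2+a)) * ε := by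
    rw [hCdef, mul_pow, ← Real.rpow_natCast ((3+a) ^ (1/(4+2*a))) 2,
      ← Real.rpow_natCast (ε ^ ((1:ℝ)/2)) 2, ← Real.rpow_mul h3a.le, ← Real.rpow_mul hε.le,
      show (1/(4+2*a))*((2:ℕ):ℝ) = (1:ℝ)/(2+a) by
        push_cast
        rw [div_mul_eq_mul_div, div_eq_div_iff (by linarith) (by linarith)]
        ring,
      show ((1:ℝ)/2)*((2:ℕ):ℝ) = (1:ℝ) by push_cast; ring,
      Real.rpow_one, show (3+a) = (2+a)+1 by ring]
  have hC6 : C ^ (6+2*a) = ((2+a)+1) ^ (((2+a)+1)/(2+a)) * ε ^ ((2+a)+1) := by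
    rw [hCdef, Real.mul_rpow (Real.rpow_pos_of_pos h3a _).le (Real.rpow_pos_of_pos hε _).le,
      ← Real.rpow_mul h3a.le, ← Real.rpow_mul hε.le,
      show (1/(4+2*a))*(6+2*a) = ((2+a)+1)/(2+a) by
        rw [div_mul_eq_mul_div, div_eq_div_iff (by linarith) (by linarith)]
        ring,
      show ((1:ℝ)/2)*(6+2*a) = (2+a)+1 by ring, show (3+a) = (2+a)+1 by ring]
  rw [hC2, hC6]
  simp only [Sconst]
  rw [show (3+a) = (2+a)+1 by ring]
  rw [show (2:ℝ)*((2+a)+1) = 2*(2+a)+2 by ring]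
  rw [show 2/(6+2*a) = (1:ℝ)/((2+a)+1) by
    rw [div_eq_div_iff (by linarith) (by linarith)]; ring]
  have hG1 : 0 < Real.Gamma (((2+a)+1)/(2+a)) := Real.Gamma_pos_of_pos hs2
  have hG2 : 0 < Real.Gamma ((2*(2+a)+2)/(2+a)) := Real.Gamma_pos_of_pos (by positivity)
  have hfin := finalAlg (p := 2+a) (e := ε) hp hε hG1 hG2
  ring_nf at hfin ⊢
  linear_combination hfin
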